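/- Suppose w satisfies x(xw')' = (n² − x²)w on an interval, w'(n) > 0, and w(x) < 0 for n < x < c (where c > n). Then w'(x) > 0 for all x in [n, c]. -/

import Mathlib

open Set

/-- If x(xw')' = (n² − x²)w on [n, c], w'(n) > 0 and w < 0 on (n, c), then w' > 0 on [n, c]. -/
theorem deriv_pos_on_interval (n c : ℝ) (hn : 0 < n) (hc : n < c)
    (w w' w'' : ℝ → ℝ)
    (hw : ∀ x ∈ Icc n c, HasDerivAt w (w' x) x)
    (hw' : ∀ x ∈ Icc n c, HasDerivAt w' (w'' x) x)
    (hode : ∀ x ∈ Icc n c, x * (w' x + x * w'' x) = (n ^ 2 - x ^ 2) * w x)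
    (hw'n : 0 < w' n)
    (hwneg : ∀ x, n < x → x < c → w x < 0) :
    ∀ x ∈ Icc n c, 0 < w' x := by
  intro x hx
  set g : ℝ → ℝ := fun y => y * w' y with hg
  have hgderiv : ∀ y ∈ Icc n c, HasDerivAt g (w' y + y * w'' y) y := by
    intro y hy
    have := (hasDerivAt_id y).fun_mul (hw' y hy)
    simpa [hg, mul_comm, add_comm] using this
  have hcont : ContinuousOn g (Icc n c) :=
    fun y hy => ((hgderiv y hy).continuousAt).continuousWithinAt
  have hmono : MonotoneOn g (Icc n c) := by
    apply monotoneOn_of_deriv_nonneg (convex_Icc n c) hcont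
    · intro y hy
      rw [interior_Icc] at hy
      exact ((hgderiv y (Ioo_subset_Icc_self hy)).differentiableAt).differentiableWithinAt
    · intro y hy
      rw [interior_Icc] at hy
      have hyI : y ∈ Icc n c := Ioo_subset_Icc_self hy
      rw [(hgderiv y hyI).deriv]
      have hy0 : 0 < y := hn.trans hy.1
      have hode' := hode y hyI
      have hwneg' := hwneg y hy.1 hy.2
      have h1 : 0 < (n ^ 2 - y ^ 2) * w y :=
        mul_pos_of_neg_of_neg (by nlinarith [hy.1, hy.2, hn]) hwneg'
      nlinarith
  have h1 : g n ≤ g x := hmono (left_mem_Icc.2 hc.le) hx hx.1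
  have h2 : 0 < g n := mul_pos hn hw'n
  have h3 : 0 < g x := h2.trans_le h1
  have hx0 : 0 < x := hn.trans_le hx.1
  have h3' : 0 < x * w' x := h3
  nlinarith [h3', hx0]
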